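/- Let f : [0,1] → [0,1] be a continuous piecewise linear map with constant absolute slope |s| > 1 on each of its finitely many laps. Then the topological entropy of f equals log |s|. -/

import Mathlib

open Set

namespace PLentropy

variable {f : ℝ → ℝ} {s : ℝ} {k : ℕ} {t : ℕ → ℝ} {w : ℕ → ℕ}

lemma tmono (htmono : ∀ i < k, t i < t (i + 1)) :
    ∀ i j, i ≤ j → j ≤ k → t i ≤ t j := by
  intro i j hij hjk
  induction j with
  | zero => simp_all
  | succ n ih =>
    rcases Nat.eq_or_lt_of_le hij with rfl | h
    · exact le_refl _
    · exact (ih (Nat.lt_succ_iff.1 h) ((Nat.le_succ n).trans hjk)).trans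
        (htmono n (Nat.lt_of_succ_le hjk)).le

lemma lap_sub (ht0 : t 0 = 0) (htk : t k = 1) (htmono : ∀ i < k, t i < t (i + 1))
    {i : ℕ} (hi : i < k) : Icc (t i) (t (i + 1)) ⊆ Icc (0:ℝ) 1 := by
  intro x hx
  constructor
  · calc (0:ℝ) = t 0 := ht0.symm
      _ ≤ t i := tmono htmono 0 i (Nat.zero_le i) hi.le
      _ ≤ x := hx.1
  · calc x ≤ t (i+1) := hx.2
      _ ≤ t k := tmono htmono (i+1) k hi (le_refl k)
      _ = 1 := htk

lemma exists_lap (ht0 : t 0 = 0) (htk : t k = 1) (hk : 1 ≤ k) :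
    ∀ y : ℝ, y ∈ Icc (0:ℝ) 1 → ∃ i, i < k ∧ y ∈ Icc (t i) (t (i + 1)) := by
  have key : ∀ j, 1 ≤ j → j ≤ k → ∀ y : ℝ, t 0 ≤ y → y ≤ t j →
      ∃ i, i < j ∧ y ∈ Icc (t i) (t (i + 1)) := by
    intro j
    induction j with
    | zero => omega
    | succ n ih =>
      intro _ hjk y h0 hj
      rcases Nat.eq_zero_or_pos n with rfl | hn
      · exact ⟨0, Nat.zero_lt_one, h0, hj⟩
      · by_cases hy : y ≤ t n
        · obtain ⟨i, hi, hmem⟩ := ih hn ((Nat.le_succ n).trans hjk) y h0 hy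
          exact ⟨i, hi.trans (Nat.lt_succ_self n), hmem⟩
        · exact ⟨n, Nat.lt_succ_self n, (not_le.1 hy).le, hj⟩
  intro y hy
  exact key k hk (le_refl k) y (ht0 ▸ hy.1) (htk ▸ hy.2)

section lip

variable (hs : 1 < s) (ht0 : t 0 = 0) (htk : t k = 1)
  (htmono : ∀ i < k, t i < t (i + 1))
  (hmaps : Set.MapsTo f (Set.Icc 0 1) (Set.Icc 0 1))
  (haff : ∀ i < k, ∃ m q : ℝ, (m = s ∨ m = -s) ∧
      ∀ x ∈ Set.Icc (t i) (t (i + 1)), f x = m * x + q)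

include hs haff in
lemma lip_lap {i : ℕ} (hi : i < k) {x y : ℝ} (hx : x ∈ Icc (t i) (t (i+1)))
    (hy : y ∈ Icc (t i) (t (i+1))) : |f x - f y| ≤ s * |x - y| := by
  obtain ⟨m, q, hm, hfa⟩ := haff i hi
  rw [hfa x hx, hfa y hy]
  have : m * x + q - (m * y + q) = m * (x - y) := by ring
  rw [this, abs_mul]
  have hms : |m| = s := by
    rcases hm with rfl | rfl
    · exact abs_of_pos (lt_trans one_pos hs)
    · rw [abs_neg]; exact abs_of_pos (lt_trans one_pos hs)
  rw [hms]

include hs ht0 htk htmono haff in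
lemma lip : ∀ x ∈ Icc (0:ℝ) 1, ∀ y ∈ Icc (0:ℝ) 1,
    |f x - f y| ≤ s * |x - y| := by
  have key : ∀ j ≤ k, ∀ x y : ℝ, 0 ≤ x → x ≤ y → y ≤ t j → |f x - f y| ≤ s * (y - x) := by
    intro j
    induction j with
    | zero =>
      intro _ x y h0 hxy hyt
      rw [ht0] at hyt
      have hxy' : x = y := le_antisymm hxy (hyt.trans h0)
      simp [hxy']
    | succ n ih =>
      intro hjk x y h0 hxy hyt
      have hnk : n < k := Nat.lt_of_succ_le hjk
      by_cases hy : y ≤ t n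
      · exact ih (hnk.le) x y h0 hxy hy
      · push_neg at hy
        by_cases hx2 : t n ≤ x
        · have := lip_lap hs haff hnk (x := x) (y := y) ⟨hx2, hxy.trans hyt⟩ ⟨hy.le, hyt⟩
          have e : |x - y| = y - x := by rw [abs_sub_comm]; exact abs_of_nonneg (by linarith)
          rwa [e] at this
        · push_neg at hx2
          have h1 : |f x - f (t n)| ≤ s * (t n - x) := by
            have := ih hnk.le x (t n) h0 hx2.le (le_refl _)
            simpa using this
          have h2 : |f (t n) - f y| ≤ s * (y - t n) := by
            have := lip_lap hs haff hnk (x := t n) (y := y)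
              ⟨le_refl _, (htmono n hnk).le⟩ ⟨hy.le, hyt⟩
            have e : |t n - y| = y - t n := by rw [abs_sub_comm]; exact abs_of_nonneg (by linarith)
            rwa [e] at this
          calc |f x - f y| ≤ |f x - f (t n)| + |f (t n) - f y| := abs_sub_le _ _ _
            _ ≤ s * (t n - x) + s * (y - t n) := add_le_add h1 h2
            _ = s * (y - x) := by ring
  intro x hx y hy
  rcases le_total x y with h | h
  · have e : |x - y| = y - x := by rw [abs_sub_comm]; exact abs_of_nonneg (by linarith)
    rw [e]; exact key k (le_refl k) x y hx.1 h (htk ▸ hy.2)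
  · have e : |x - y| = x - y := abs_of_nonneg (by linarith)
    rw [abs_sub_comm (f x), e]
    exact key k (le_refl k) y x hy.1 h (htk ▸ hx.2)

include hs ht0 htk htmono hmaps haff in
lemma lip_iter : ∀ n : ℕ, ∀ x ∈ Icc (0:ℝ) 1, ∀ y ∈ Icc (0:ℝ) 1,
    |f^[n] x - f^[n] y| ≤ s ^ n * |x - y| := by
  intro n
  induction n with
  | zero => simp
  | succ n ih =>
    intro x hx y hy
    rw [Function.iterate_succ_apply', Function.iterate_succ_apply']
    calc |f (f^[n] x) - f (f^[n] y)| ≤ s * |f^[n] x - f^[n] y| :=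
          lip hs ht0 htk htmono haff _ (hmaps.iterate n hx) _ (hmaps.iterate n hy)
      _ ≤ s * (s ^ n * |x - y|) := by
          have := ih x hx y hy
          nlinarith [abs_nonneg (f^[n] x - f^[n] y), abs_nonneg (x - y)]
      _ = s ^ (n+1) * |x - y| := by ring

end lip

/-- The itinerary cell. -/
def cell (f : ℝ → ℝ) (t : ℕ → ℝ) (M : ℕ) (w : ℕ → ℕ) : Set ℝ :=
  {x | x ∈ Icc (0:ℝ) 1 ∧ ∀ j < M, f^[j] x ∈ Icc (t (w j)) (t (w j + 1))}

lemma cell_zero : cell f t 0 w = Icc (0:ℝ) 1 := by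
  ext x; simp [cell]

lemma cell_mono_time {M M' : ℕ} (h : M ≤ M') (w : ℕ → ℕ) :
    cell f t M' w ⊆ cell f t M w :=
  fun x hx => ⟨hx.1, fun j hj => hx.2 j (lt_of_lt_of_le hj h)⟩

lemma cell_congr {f : ℝ → ℝ} {t : ℕ → ℝ} {M : ℕ} {w w' : ℕ → ℕ}
    (h : ∀ j < M, w j = w' j) : cell f t M w = cell f t M w' := by
  ext x
  simp only [cell, mem_setOf_eq]
  constructor <;> rintro ⟨hx, hl⟩ <;> refine ⟨hx, fun j hj => ?_⟩
  · rw [← h j hj]; exact hl j hj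
  · rw [h j hj]; exact hl j hj

lemma cell_shift {f : ℝ → ℝ} {t : ℕ → ℝ} {M m r : ℕ} {w : ℕ → ℕ}
    (hmaps : Set.MapsTo f (Set.Icc 0 1) (Set.Icc 0 1))
    (hrm : r + m ≤ M) {y : ℝ} (hy : y ∈ cell f t M w) :
    f^[r] y ∈ cell f t m (fun i => w (r + i)) := by
  refine ⟨hmaps.iterate r hy.1, fun i hi => ?_⟩
  rw [← Function.iterate_add_apply]
  simp only []
  rw [Nat.add_comm r i]
  exact hy.2 (i + r) (by omega)


section struct

variable (hs : 1 < s) (ht0 : t 0 = 0) (htk : t k = 1)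
  (htmono : ∀ i < k, t i < t (i + 1))
  (hmaps : Set.MapsTo f (Set.Icc 0 1) (Set.Icc 0 1))
  (haff : ∀ i < k, ∃ m q : ℝ, (m = s ∨ m = -s) ∧
      ∀ x ∈ Set.Icc (t i) (t (i + 1)), f x = m * x + q)

include hs hmaps haff in
lemma cell_struct : ∀ (M : ℕ) (w : ℕ → ℕ), (∀ j < M, w j < k) →
    Convex ℝ (cell f t M w) ∧
    ∃ A B : ℝ, |A| = s ^ M ∧ ∀ x ∈ cell f t M w, f^[M] x = A * x + B := by
  intro M
  induction M with
  | zero =>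
    intro w _
    refine ⟨cell_zero ▸ convex_Icc _ _, 1, 0, by simp, by simp⟩
  | succ M ih =>
    intro w hw
    obtain ⟨m₀, q₀, hm₀, hf₀⟩ := haff (w 0) (hw 0 (Nat.succ_pos M))
    obtain ⟨hconv, A, B, hA, hAB⟩ := ih (fun j => w (j+1)) (fun j hj => hw (j+1) (by omega))
    have hsplit : cell f t (M+1) w =
        (Icc (0:ℝ) 1 ∩ Icc (t (w 0)) (t (w 0 + 1))) ∩
          {x | m₀ * x + q₀ ∈ cell f t M (fun j => w (j+1))} := by
      ext x
      simp only [cell, mem_setOf_eq, mem_inter_iff]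
      constructor
      · rintro ⟨hx01, hlap⟩
        have hx0 : x ∈ Icc (t (w 0)) (t (w 0 + 1)) := by
          simpa using hlap 0 (Nat.succ_pos M)
        refine ⟨⟨hx01, hx0⟩, ?_⟩
        rw [← hf₀ x hx0]
        exact ⟨hmaps hx01, fun j hj => by
          rw [← Function.iterate_succ_apply]
          exact hlap (j+1) (by omega)⟩
      · rintro ⟨⟨hx01, hx0⟩, hfx⟩
        rw [← hf₀ x hx0] at hfx
        refine ⟨hx01, fun j hj => ?_⟩
        rcases Nat.eq_zero_or_pos j with rfl | hj0
        · simpa using hx0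
        · obtain ⟨j', rfl⟩ := Nat.exists_eq_succ_of_ne_zero hj0.ne'
          rw [Function.iterate_succ_apply]
          exact hfx.2 j' (by omega)
    constructor
    · rw [hsplit]
      refine (((convex_Icc _ _).inter (convex_Icc _ _)).inter ?_)
      intro x hx y hy a b ha hb hab
      have : m₀ * (a • x + b • y) + q₀ = a • (m₀ * x + q₀) + b • (m₀ * y + q₀) := by
        simp only [smul_eq_mul]; linear_combination (-q₀) * hab
      rw [mem_setOf_eq, this]
      exact hconv hx hy ha hb hab
    · refine ⟨A * m₀, A * q₀ + B, ?_, ?_⟩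
      · rw [abs_mul, hA]
        have hm : |m₀| = s := by
          rcases hm₀ with rfl | rfl
          · exact abs_of_pos (lt_trans one_pos hs)
          · rw [abs_neg]; exact abs_of_pos (lt_trans one_pos hs)
        rw [hm]; ring
      · intro x hx
        rw [hsplit] at hx
        obtain ⟨⟨hx01, hx0⟩, hfx⟩ := hx
        rw [Function.iterate_succ_apply, hf₀ x hx0, hAB _ hfx]
        ring

include hs hmaps haff in
lemma cell_diam {M : ℕ} {w : ℕ → ℕ} (hw : ∀ j < M, w j < k) :
    ∀ x ∈ cell f t M w, ∀ y ∈ cell f t M w, |x - y| ≤ (1/s) ^ M := by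
  obtain ⟨-, A, B, hA, hAB⟩ := cell_struct hs hmaps haff M w hw
  intro x hx y hy
  have hs0 : (0:ℝ) < s := lt_trans one_pos hs
  have hA0 : (0:ℝ) < |A| := by rw [hA]; positivity
  have hfx : f^[M] x ∈ Icc (0:ℝ) 1 := hmaps.iterate M hx.1
  have hfy : f^[M] y ∈ Icc (0:ℝ) 1 := hmaps.iterate M hy.1
  have h1 : |f^[M] x - f^[M] y| ≤ 1 := by
    rw [abs_le]; constructor <;> [linarith [hfx.1, hfx.2, hfy.1, hfy.2];
      linarith [hfx.1, hfx.2, hfy.1, hfy.2]]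
  rw [hAB x hx, hAB y hy] at h1
  have h2 : A * x + B - (A * y + B) = A * (x - y) := by ring
  rw [h2, abs_mul, hA] at h1
  rw [div_pow, one_pow]
  rw [le_div_iff₀ (by positivity)]
  linarith [h1]

include hs hmaps haff in
lemma cell_volume {M : ℕ} {w : ℕ → ℕ} (hw : ∀ j < M, w j < k) :
    MeasureTheory.volume (cell f t M w) ≤ ENNReal.ofReal ((1/s) ^ M) := by
  apply (Real.volume_le_diam _).trans
  apply EMetric.diam_le
  intro x hx y hy
  rw [edist_dist, Real.dist_eq]
  exact ENNReal.ofReal_le_ofReal (cell_diam hs hmaps haff hw x hx y hy)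

include hs htmono hmaps haff in
lemma cell_inter_subsingleton {M : ℕ} {w w' : ℕ → ℕ}
    (hw : ∀ j < M, w j < k) (hw' : ∀ j < M, w' j < k)
    (hne : ∃ j < M, w j ≠ w' j) :
    (cell f t M w ∩ cell f t M w').Subsingleton := by
  classical
  have hex : ∃ j, j < M ∧ w j ≠ w' j := by
    obtain ⟨j, hj, hne⟩ := hne; exact ⟨j, hj, hne⟩
  set j := Nat.find hex with hjdef
  obtain ⟨hjM, hjne⟩ := Nat.find_spec hex
  have hpre : ∀ i < j, w i = w' i := by
    intro i hi
    by_contra hcon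
    have hiM : i < M := hi.trans hjM
    exact Nat.find_min hex hi ⟨hiM, hcon⟩
  -- the intersection is contained in the prefix cell, on which f^[j] is injective,
  -- and f^[j] is constant on the intersection.
  obtain ⟨-, A, B, hA, hAB⟩ := cell_struct hs hmaps haff j w (fun i hi => hw i (hi.trans hjM))
  have hA0 : A ≠ 0 := by
    intro h
    rw [h, abs_zero] at hA
    have : (0:ℝ) < s ^ j := by positivity
    linarith
  -- value of f^[j] is pinned on the intersection
  have pin : ∃ c : ℝ, ∀ x ∈ cell f t M w ∩ cell f t M w', f^[j] x = c := by
    rcases lt_or_gt_of_ne hjne with hlt | hlt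
    · refine ⟨t (w' j), fun x hx => ?_⟩
      have h1 : f^[j] x ∈ Icc (t (w j)) (t (w j + 1)) := hx.1.2 j hjM
      have h2 : f^[j] x ∈ Icc (t (w' j)) (t (w' j + 1)) := hx.2.2 j hjM
      have h3 : t (w j + 1) ≤ t (w' j) := tmono htmono _ _ hlt (hw' j hjM).le
      linarith [h1.2, h2.1]
    · refine ⟨t (w j), fun x hx => ?_⟩
      have h1 : f^[j] x ∈ Icc (t (w j)) (t (w j + 1)) := hx.1.2 j hjM
      have h2 : f^[j] x ∈ Icc (t (w' j)) (t (w' j + 1)) := hx.2.2 j hjM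
      have h3 : t (w' j + 1) ≤ t (w j) := tmono htmono _ _ hlt (hw j hjM).le
      linarith [h1.1, h2.2]
  obtain ⟨c, hc⟩ := pin
  intro x hx y hy
  have hxj : x ∈ cell f t j w := cell_mono_time hjM.le w hx.1
  have hyj : y ∈ cell f t j w := by
    refine ⟨hy.2.1, fun i hi => ?_⟩
    rw [hpre i hi]
    exact hy.2.2 i (hi.trans hjM)
  have e1 : A * x + B = c := by rw [← hAB x hxj]; exact hc x hx
  have e2 : A * y + B = c := by rw [← hAB y hyj]; exact hc y hy
  have : A * x = A * y := by linarith
  exact mul_left_cancel₀ hA0 this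

/-- extension of a finite word to `ℕ → ℕ`. -/
def extw {k M : ℕ} (v : Fin M → Fin k) : ℕ → ℕ :=
  fun j => if h : j < M then (v ⟨j, h⟩ : ℕ) else 0

lemma extw_lt {M : ℕ} (hk : 1 ≤ k) (v : Fin M → Fin k) : ∀ j, extw v j < k := by
  intro j
  unfold extw
  split
  · exact (v ⟨j, ‹_›⟩).2
  · exact hk

include ht0 htk in
lemma cell_cover (hk : 1 ≤ k) (hmaps : Set.MapsTo f (Set.Icc 0 1) (Set.Icc 0 1)) (M : ℕ) :
    Icc (0:ℝ) 1 ⊆ ⋃ v : Fin M → Fin k, cell f t M (extw v) := by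
  intro x hx
  have hch : ∀ j : Fin M, ∃ i, i < k ∧ f^[(j:ℕ)] x ∈ Icc (t i) (t (i + 1)) := by
    intro j
    exact exists_lap ht0 htk hk _ (hmaps.iterate j hx)
  choose wi hwi hmem using hch
  refine mem_iUnion.2 ⟨fun j => ⟨wi j, hwi j⟩, hx, fun j hj => ?_⟩
  have : extw (fun j => (⟨wi j, hwi j⟩ : Fin k)) j = wi ⟨j, hj⟩ := by
    unfold extw; rw [dif_pos hj]
  rw [this]
  exact hmem ⟨j, hj⟩

include hs ht0 htk hmaps haff in
lemma card_pos_words (hk : 1 ≤ k) (M : ℕ) :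
    s ^ M ≤ ((Finset.univ.filter (fun v : Fin M → Fin k =>
      0 < MeasureTheory.volume (cell f t M (extw v)))).card : ℝ) := by
  classical
  have hs0 : (0:ℝ) < s := lt_trans one_pos hs
  set d : ℝ := (1/s) ^ M with hd
  have hd0 : 0 < d := by positivity
  set W := Finset.univ.filter (fun v : Fin M → Fin k =>
      0 < MeasureTheory.volume (cell f t M (extw v))) with hW
  have h1 : (1 : ENNReal) ≤ (W.card : ENNReal) * ENNReal.ofReal d := by
    have e0 : (1 : ENNReal) = MeasureTheory.volume (Icc (0:ℝ) 1) := by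
      rw [Real.volume_Icc]; norm_num
    rw [e0]
    calc MeasureTheory.volume (Icc (0:ℝ) 1)
        ≤ MeasureTheory.volume (⋃ v : Fin M → Fin k, cell f t M (extw v)) :=
          MeasureTheory.measure_mono (cell_cover ht0 htk hk hmaps M)
      _ ≤ ∑' v : Fin M → Fin k, MeasureTheory.volume (cell f t M (extw v)) :=
          MeasureTheory.measure_iUnion_le _
      _ = ∑ v : Fin M → Fin k, MeasureTheory.volume (cell f t M (extw v)) := tsum_fintype _
      _ = ∑ v ∈ W, MeasureTheory.volume (cell f t M (extw v)) := by
          rw [hW]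
          refine (Finset.sum_filter_of_ne ?_).symm
          intro v _ hv
          exact pos_iff_ne_zero.2 hv
      _ ≤ W.card • ENNReal.ofReal d := by
          refine Finset.sum_le_card_nsmul _ _ _ ?_
          intro v _
          exact cell_volume hs hmaps haff (fun j hj => extw_lt hk v j)
      _ = (W.card : ENNReal) * ENNReal.ofReal d := by rw [nsmul_eq_mul]
  have h2 : ENNReal.ofReal (s ^ M) ≤ (W.card : ENNReal) := by
    have hinv : (ENNReal.ofReal d)⁻¹ = ENNReal.ofReal (s ^ M) := by
      rw [← ENNReal.ofReal_inv_of_pos hd0]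
      congr 1
      rw [hd, one_div, inv_pow, inv_inv]
    calc ENNReal.ofReal (s ^ M) = (ENNReal.ofReal d)⁻¹ * 1 := by rw [hinv, mul_one]
      _ ≤ (ENNReal.ofReal d)⁻¹ * ((W.card : ENNReal) * ENNReal.ofReal d) := by
          exact mul_le_mul_right h1 _
      _ = (W.card : ENNReal) * ((ENNReal.ofReal d)⁻¹ * ENNReal.ofReal d) := by ring
      _ ≤ (W.card : ENNReal) * 1 := by
          refine mul_le_mul_right ?_ _
          exact ENNReal.inv_mul_le_one _
      _ = (W.card : ENNReal) := mul_one _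
  rw [← ENNReal.ofReal_natCast W.card] at h2
  exact (ENNReal.ofReal_le_ofReal_iff (by positivity)).1 h2

omit ht0 htk htmono in
lemma cell_nonsub {M : ℕ} {w : ℕ → ℕ} (hw : ∀ j < M, w j < k)
    (hpos : 0 < MeasureTheory.volume (cell f t M w)) :
    ∃ u ∈ cell f t M w, ∃ u' ∈ cell f t M w, u ≠ u' := by
  by_contra hcon
  push_neg at hcon
  have hsub : (cell f t M w).Subsingleton := fun x hx y hy => hcon x hx y hy
  rw [hsub.measure_zero] at hpos
  exact lt_irrefl _ hpos

include hs hmaps haff in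
lemma block_pos {M m r : ℕ} {w : ℕ → ℕ} (hw : ∀ j < M, w j < k) (hrm : r + m ≤ M)
    (hpos : 0 < MeasureTheory.volume (cell f t M w)) :
    0 < MeasureTheory.volume (cell f t m (fun i => w (r + i))) := by
  obtain ⟨u, hu, u', hu', hne⟩ := cell_nonsub hw hpos
  obtain ⟨hconv, -⟩ := cell_struct hs hmaps haff M w hw
  obtain ⟨-, A, B, hA, hAB⟩ := cell_struct hs hmaps haff r w
    (fun j hj => hw j (by omega))
  have hs0 : (0:ℝ) < s := lt_trans one_pos hs
  have hA0 : A ≠ 0 := by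
    intro h
    rw [h, abs_zero] at hA
    have : (0:ℝ) < s ^ r := by positivity
    linarith
  set e := A * u + B with he
  set e' := A * u' + B with he'
  have hee : e ≠ e' := by
    intro h
    apply hne
    apply mul_left_cancel₀ hA0
    have : A * u = e - B := by rw [he]; ring
    have h2 : A * u' = e' - B := by rw [he']; ring
    rw [this, h2, h]
  have hkey : Icc (min e e') (max e e') ⊆ cell f t m (fun i => w (r + i)) := by
    intro c hc
    -- find x in the segment [u, u'] with A * x + B = c
    have hxex : ∃ x ∈ cell f t M w, A * x + B = c := by
      set θ := (c - e)/(e' - e) with hθ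
      have hθ01 : 0 ≤ θ ∧ θ ≤ 1 := by
        rcases le_or_gt e e' with hle | hlt
        · have hlt : e < e' := lt_of_le_of_ne hle hee
          have h1 : min e e' = e := min_eq_left hle
          have h2 : max e e' = e' := max_eq_right hle
          rw [h1] at hc; rw [h2] at hc
          exact ⟨div_nonneg (by linarith [hc.1]) (by linarith),
            (div_le_one (by linarith)).2 (by linarith [hc.2])⟩
        · have h1 : min e e' = e' := min_eq_right hlt.le
          have h2 : max e e' = e := max_eq_left hlt.le
          rw [h1] at hc; rw [h2] at hc
          have hrw : θ = (e - c)/(e - e') := by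
            rw [hθ, ← neg_sub c e, ← neg_sub e' e, neg_div_neg_eq]
          rw [hrw]
          exact ⟨div_nonneg (by linarith [hc.2]) (by linarith),
            (div_le_one (by linarith)).2 (by linarith [hc.1])⟩
      refine ⟨(1 - θ) * u + θ * u', ?_, ?_⟩
      · have := hconv.segment_subset hu hu'
        apply this
        exact ⟨1 - θ, θ, by linarith [hθ01.2], hθ01.1, by ring, by simp [smul_eq_mul]⟩
      · have hne2 : (A*u'+B) - (A*u+B) ≠ 0 := by
          rw [← he, ← he']
          exact sub_ne_zero.2 (Ne.symm hee)
        have hθe : θ * ((A*u'+B) - (A*u+B)) = c - (A*u+B) := by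
          rw [hθ, he, he']
          field_simp
        linear_combination hθe
    obtain ⟨x, hx, hxc⟩ := hxex
    have : f^[r] x = c := by
      rw [hAB x (cell_mono_time (by omega) w hx), hxc]
    rw [← this]
    exact cell_shift hmaps hrm hx
  calc (0:ENNReal) < ENNReal.ofReal (max e e' - min e e') := by
        rw [ENNReal.ofReal_pos]
        have := min_lt_max.2 hee
        linarith
    _ = MeasureTheory.volume (Icc (min e e') (max e e')) := Real.volume_Icc.symm
    _ ≤ _ := MeasureTheory.measure_mono hkey

end struct

section geom

open MeasureTheory

lemma convex_mem_of_between {C : Set ℝ} (hC : Convex ℝ C) (hne : C.Nonempty)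
    {x : ℝ} (h1 : sInf C < x) (h2 : x < sSup C) : x ∈ C := by
  obtain ⟨a, ha, hax⟩ := exists_lt_of_csInf_lt hne h1
  obtain ⟨b, hb, hxb⟩ := exists_lt_of_lt_csSup hne h2
  exact hC.ordConnected.out ha hb ⟨hax.le, hxb.le⟩

lemma len_le_sub {C : Set ℝ} (hb : C ⊆ Icc (0:ℝ) 1) (hne : C.Nonempty) :
    (volume C).toReal ≤ sSup C - sInf C := by
  have hba : BddAbove C := ⟨1, fun x hx => (hb hx).2⟩
  have hbb : BddBelow C := ⟨0, fun x hx => (hb hx).1⟩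
  have hsub : C ⊆ Icc (sInf C) (sSup C) := fun x hx => ⟨csInf_le hbb hx, le_csSup hba hx⟩
  have h1 : volume C ≤ ENNReal.ofReal (sSup C - sInf C) := by
    calc volume C ≤ volume (Icc (sInf C) (sSup C)) := measure_mono hsub
      _ = ENNReal.ofReal (sSup C - sInf C) := Real.volume_Icc
  obtain ⟨x, hx⟩ := hne
  exact ENNReal.toReal_le_of_le_ofReal (by linarith [csInf_le hbb hx, le_csSup hba hx]) h1

lemma two_convex_order {C D : Set ℝ} (hC : Convex ℝ C) (hD : Convex ℝ D)
    (hCne : C.Nonempty) (hDne : D.Nonempty)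
    (hCl : sInf C < sSup C) (hDl : sInf D < sSup D)
    (hsub : (C ∩ D).Subsingleton) : sSup C ≤ sInf D ∨ sSup D ≤ sInf C := by
  by_contra hcon
  push_neg at hcon
  obtain ⟨h1, h2⟩ := hcon
  set a := max (sInf C) (sInf D) with ha
  set b := min (sSup C) (sSup D) with hb
  have hab : a < b := by
    rw [ha, hb]
    rcases max_cases (sInf C) (sInf D) with ⟨he, -⟩ | ⟨he, -⟩ <;> rw [he] <;>
      [exact lt_min hCl h2; exact lt_min h1 hDl]
  set p := a + (b - a)/3 with hp
  set q := a + 2*(b - a)/3 with hq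
  have hpq : p ≠ q := by rw [hp, hq]; intro h; nlinarith [hab]
  have hmem : ∀ x, a < x → x < b → x ∈ C ∩ D := by
    intro x hax hxb
    constructor
    · exact convex_mem_of_between hC hCne (lt_of_le_of_lt (le_max_left _ _) hax)
        (lt_of_lt_of_le hxb (min_le_left _ _))
    · exact convex_mem_of_between hD hDne (lt_of_le_of_lt (le_max_right _ _) hax)
        (lt_of_lt_of_le hxb (min_le_right _ _))
  have hpC : p ∈ C ∩ D := hmem p (by rw [hp]; linarith) (by rw [hp]; linarith)
  have hqC : q ∈ C ∩ D := hmem q (by rw [hq]; linarith) (by rw [hq]; linarith)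
  exact hpq (hsub hpC hqC)

lemma chain_absurd {ε δ z : ℝ} {C₁ C₂ C₃ : Set ℝ}
    (h1 : C₁ ⊆ Icc (0:ℝ) 1) (h3 : C₃ ⊆ Icc (0:ℝ) 1)
    (hδ : δ ≤ sSup C₂ - sInf C₂) (h12 : sSup C₁ ≤ sInf C₂) (h23 : sSup C₂ ≤ sInf C₃)
    (hp1 : ∃ p ∈ C₁, dist p z < ε) (hp3 : ∃ p ∈ C₃, dist p z < ε)
    (hεδ : 2*ε < δ) : False := by
  obtain ⟨p₁, hp₁, hd₁⟩ := hp1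
  obtain ⟨p₃, hp₃, hd₃⟩ := hp3
  have e1 : p₁ ≤ sSup C₁ := le_csSup ⟨1, fun x hx => (h1 hx).2⟩ hp₁
  have e3 : sInf C₃ ≤ p₃ := csInf_le ⟨0, fun x hx => (h3 hx).1⟩ hp₃
  rw [Real.dist_eq, abs_lt] at hd₁ hd₃
  linarith [hd₁.1, hd₁.2, hd₃.1, hd₃.2]

end geom

section key

open MeasureTheory Dynamics Uniformity UniformSpace
open scoped SetRel

variable (hs : 1 < s) (ht0 : t 0 = 0) (htk : t k = 1)
  (htmono : ∀ i < k, t i < t (i + 1))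
  (hmaps : Set.MapsTo f (Set.Icc 0 1) (Set.Icc 0 1))
  (haff : ∀ i < k, ∃ m q : ℝ, (m = s ∨ m = -s) ∧
      ∀ x ∈ Set.Icc (t i) (t (i + 1)), f x = m * x + q)

include hs ht0 htk htmono hmaps haff in
lemma key (hk : 1 ≤ k) (m : ℕ) (hm : 1 ≤ m) :
    ∃ U ∈ uniformity ℝ, ∀ n, 1 ≤ n → ∀ S : Finset ℝ,
      IsDynCoverOf f (Icc (0:ℝ) 1) U (n*m) S →
      s ^ (n*m) ≤ (S.card : ℝ) * 2 ^ n := by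
  classical
  have hs0 : (0:ℝ) < s := lt_trans one_pos hs
  set P := Finset.univ.filter (fun b : Fin m → Fin k =>
    0 < volume (cell f t m (extw b))) with hP
  have hPne : P.Nonempty := by
    rw [← Finset.card_pos]
    have h := card_pos_words hs ht0 htk hmaps haff hk m
    have h2 : (0:ℝ) < (P.card : ℝ) := lt_of_lt_of_le (by positivity) h
    exact_mod_cast h2
  set δ := P.inf' hPne (fun b => (volume (cell f t m (extw b))).toReal) with hδdef
  have hcellvol : ∀ b : Fin m → Fin k, b ∈ P →
      (volume (cell f t m (extw b))).toReal ∈ Set.Ioi (0:ℝ) := by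
    intro b hb
    have hpos : 0 < volume (cell f t m (extw b)) := (Finset.mem_filter.1 hb).2
    have hfin : volume (cell f t m (extw b)) < ⊤ :=
      (cell_volume hs hmaps haff (fun j _ => extw_lt hk b j)).trans_lt ENNReal.ofReal_lt_top
    exact ENNReal.toReal_pos hpos.ne' hfin.ne
  have hδpos : 0 < δ := by
    obtain ⟨b, hb, he⟩ := P.exists_mem_eq_inf' hPne
      (fun b => (volume (cell f t m (extw b))).toReal)
    rw [hδdef, he]
    exact hcellvol b hb
  refine ⟨{p : ℝ × ℝ | dist p.1 p.2 < δ/3}, Metric.dist_mem_uniformity (by linarith), ?_⟩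
  intro n hn S hS
  have hm0 : 0 < m := hm
  set U := {p : ℝ × ℝ | dist p.1 p.2 < δ/3} with hU
  set W := Finset.univ.filter (fun v : Fin (n*m) → Fin k =>
    0 < volume (cell f t (n*m) (extw v))) with hW
  have hWcard : s ^ (n*m) ≤ (W.card : ℝ) := card_pos_words hs ht0 htk hmaps haff hk (n*m)
  -- choose, for each positive word, a point in its cell and a covering ball
  have hch : ∀ v : Fin (n*m) → Fin k, v ∈ W → ∃ y x, x ∈ S ∧
      y ∈ cell f t (n*m) (extw v) ∧ y ∈ ball x (dynEntourage f U (n*m)) := by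
    intro v hv
    have hpos : 0 < volume (cell f t (n*m) (extw v)) := (Finset.mem_filter.1 hv).2
    obtain ⟨y, hy⟩ := nonempty_of_measure_ne_zero hpos.ne'
    have hyF : y ∈ Icc (0:ℝ) 1 := hy.1
    have := hS hyF
    simp only [Finset.mem_coe, mem_iUnion, exists_prop] at this
    obtain ⟨x, hxS, hball⟩ := this
    exact ⟨y, x, hxS, hy, by
      rw [mem_ball_dynEntourage]; intro j hj
      have := mem_dynEntourage.1 hball j hj
      simp only [hU, ball, mem_preimage, mem_setOf_eq] at this ⊢
      rw [dist_comm]; exact this⟩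
  choose! yv xv hxvS hycell hyball using hch
  -- the block decomposition
  have hidx : ∀ (j : Fin n) (i : Fin m), (j:ℕ)*m + i < n*m := by
    intro j i
    calc (j:ℕ)*m + i < (j:ℕ)*m + m := by omega
      _ = ((j:ℕ)+1)*m := by ring
      _ ≤ n*m := Nat.mul_le_mul_right m j.2
  set blocks : (Fin (n*m) → Fin k) → (Fin n → Fin m → Fin k) :=
    fun v j i => v ⟨(j:ℕ)*m + i, hidx j i⟩ with hblocks
  have hblock_congr : ∀ (v : Fin (n*m) → Fin k) (j : Fin n),
      cell f t m (extw (blocks v j)) = cell f t m (fun i => extw v ((j:ℕ)*m + i)) := by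
    intro v j
    apply cell_congr
    intro i hi
    unfold extw
    rw [dif_pos hi, dif_pos (hidx j ⟨i, hi⟩)]
  -- fiberwise count
  have hfib : W.card = ∑ x ∈ S, (W.filter (fun v => xv v = x)).card :=
    Finset.card_eq_sum_card_fiberwise hxvS
  have hfbound : ∀ x ∈ S, (W.filter (fun v => xv v = x)).card ≤ 2^n := by
    intro x hxS
    set Bxj := fun j : Fin n => P.filter (fun b =>
      (cell f t m (extw b) ∩ Metric.ball (f^[(j:ℕ)*m] x) (δ/3)).Nonempty) with hBxj
    have hBcard : ∀ j, (Bxj j).card ≤ 2 := by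
      intro j
      by_contra hcon
      push_neg at hcon
      obtain ⟨b₁, hb₁, b₂, hb₂, b₃, hb₃, h12, h13, h23⟩ := Finset.two_lt_card.1 hcon
      set C : (Fin m → Fin k) → Set ℝ := fun b => cell f t m (extw b) with hC
      have fact : ∀ b ∈ Bxj j, Convex ℝ (C b) ∧ C b ⊆ Icc (0:ℝ) 1 ∧
          δ ≤ sSup (C b) - sInf (C b) ∧ ∃ p ∈ C b, dist p (f^[(j:ℕ)*m] x) < δ/3 := by
        intro b hb
        rw [hBxj, Finset.mem_filter] at hb
        obtain ⟨hbP, hbmeet⟩ := hb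
        have hconv := (cell_struct hs hmaps haff m (extw b) (fun j _ => extw_lt hk b j)).1
        have hsubset : C b ⊆ Icc (0:ℝ) 1 := fun y hy => hy.1
        have hne : (C b).Nonempty := nonempty_of_measure_ne_zero (Finset.mem_filter.1 hbP).2.ne'
        refine ⟨hconv, hsubset, ?_, ?_⟩
        · calc δ ≤ (volume (C b)).toReal := P.inf'_le _ hbP
            _ ≤ sSup (C b) - sInf (C b) := len_le_sub hsubset hne
        · obtain ⟨p, hp1, hp2⟩ := hbmeet
          exact ⟨p, hp1, Metric.mem_ball.1 hp2⟩
      have hsub : ∀ b b' : Fin m → Fin k, b ≠ b' → (C b ∩ C b').Subsingleton := by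
        intro b b' hbb
        apply cell_inter_subsingleton hs htmono hmaps haff
          (fun j _ => extw_lt hk b j) (fun j _ => extw_lt hk b' j)
        obtain ⟨i, hi⟩ := Function.ne_iff.1 hbb
        refine ⟨(i:ℕ), i.2, ?_⟩
        unfold extw
        rw [dif_pos i.2, dif_pos i.2]
        simp only [Fin.eta]
        exact fun h => hi (Fin.val_injective h)
      obtain ⟨c1, cb1, cl1, cm1⟩ := fact b₁ hb₁
      obtain ⟨c2, cb2, cl2, cm2⟩ := fact b₂ hb₂
      obtain ⟨c3, cb3, cl3, cm3⟩ := fact b₃ hb₃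
      have hne1 : (C b₁).Nonempty := cm1.imp (fun p hp => hp.1)
      have hne2 : (C b₂).Nonempty := cm2.imp (fun p hp => hp.1)
      have hne3 : (C b₃).Nonempty := cm3.imp (fun p hp => hp.1)
      have hl1 : sInf (C b₁) < sSup (C b₁) := by linarith
      have hl2 : sInf (C b₂) < sSup (C b₂) := by linarith
      have hl3 : sInf (C b₃) < sSup (C b₃) := by linarith
      have hεδ : 2*(δ/3) < δ := by linarith
      rcases two_convex_order c1 c2 hne1 hne2 hl1 hl2 (hsub b₁ b₂ h12) with R12 | R21 <;>
        rcases two_convex_order c2 c3 hne2 hne3 hl2 hl3 (hsub b₂ b₃ h23) with R23 | R32 <;>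
        rcases two_convex_order c1 c3 hne1 hne3 hl1 hl3 (hsub b₁ b₃ h13) with R13 | R31
      · exact chain_absurd cb1 cb3 cl2 R12 R23 cm1 cm3 hεδ
      · exact chain_absurd cb1 cb3 cl2 R12 R23 cm1 cm3 hεδ
      · exact chain_absurd cb1 cb2 cl3 R13 R32 cm1 cm2 hεδ
      · exact chain_absurd cb3 cb2 cl1 R31 R12 cm3 cm2 hεδ
      · exact chain_absurd cb2 cb3 cl1 R21 R13 cm2 cm3 hεδ
      · exact chain_absurd cb2 cb1 cl3 R23 R31 cm2 cm1 hεδ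
      · exact chain_absurd cb3 cb1 cl2 R32 R21 cm3 cm1 hεδ
      · exact chain_absurd cb3 cb1 cl2 R32 R21 cm3 cm1 hεδ
    -- inject fibers into products of blocks
    have hinj : (W.filter (fun v => xv v = x)).card ≤ (Fintype.piFinset Bxj).card := by
      apply Finset.card_le_card_of_injOn blocks
      · intro v hv
        rw [Finset.mem_coe, Finset.mem_filter] at hv
        obtain ⟨hvW, hvx⟩ := hv
        rw [Finset.mem_coe, Fintype.mem_piFinset]
        intro j
        rw [hBxj, Finset.mem_filter]
        constructor
        · -- positive volume of the block cell
          rw [hP, Finset.mem_filter]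
          refine ⟨Finset.mem_univ _, ?_⟩
          rw [hblock_congr v j]
          exact block_pos hs hmaps haff (fun j _ => extw_lt hk v j)
            (by calc (j:ℕ)*m + m = ((j:ℕ)+1)*m := by ring
                  _ ≤ n*m := Nat.mul_le_mul_right m j.2)
            (Finset.mem_filter.1 hvW).2
        · -- meets the ball
          refine ⟨f^[(j:ℕ)*m] (yv v), ?_, ?_⟩
          · rw [hblock_congr v j]
            exact cell_shift hmaps
              (by calc (j:ℕ)*m + m = ((j:ℕ)+1)*m := by ring
                    _ ≤ n*m := Nat.mul_le_mul_right m j.2)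
              (hycell v hvW)
          · have hball := hyball v hvW
            rw [mem_ball_dynEntourage] at hball
            have hjm : (j:ℕ)*m < n*m := by
              calc (j:ℕ)*m + 0 < (j:ℕ)*m + m := by omega
                _ = ((j:ℕ)+1)*m := by ring
                _ ≤ n*m := Nat.mul_le_mul_right m j.2
            have := hball ((j:ℕ)*m) (by omega)
            rw [hvx] at this
            rw [Metric.mem_ball]
            have : dist (f^[(j:ℕ)*m] x) (f^[(j:ℕ)*m] (yv v)) < δ/3 := this
            rwa [dist_comm] at this
      · intro v hv v' hv' hvv
        funext idx
        have hq : (idx:ℕ)/m < n := (Nat.div_lt_iff_lt_mul hm0).2 idx.2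
        have hr : (idx:ℕ) % m < m := Nat.mod_lt _ hm0
        have := congrFun (congrFun hvv ⟨(idx:ℕ)/m, hq⟩) ⟨(idx:ℕ) % m, hr⟩
        rw [hblocks] at this
        simp only at this
        have hidemeq : (⟨(idx:ℕ)/m*m + (idx:ℕ)%m, hidx ⟨(idx:ℕ)/m, hq⟩ ⟨(idx:ℕ)%m, hr⟩⟩ : Fin (n*m)) = idx := by
          apply Fin.ext
          simp only []
          rw [Nat.mul_comm ((idx:ℕ)/m) m]
          exact Nat.div_add_mod _ m
        rwa [hidemeq] at this
    have hprod : (Fintype.piFinset Bxj).card ≤ 2^n := by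
      rw [Fintype.card_piFinset]
      calc ∏ j, (Bxj j).card ≤ ∏ _j : Fin n, 2 :=
            Finset.prod_le_prod' (fun j _ => hBcard j)
        _ = 2^n := by rw [Finset.prod_const, Finset.card_univ, Fintype.card_fin]
    exact hinj.trans hprod
  calc s ^ (n*m) ≤ (W.card : ℝ) := hWcard
    _ = ∑ x ∈ S, ((W.filter (fun v => xv v = x)).card : ℝ) := by
        rw [hfib]; push_cast; ring
    _ ≤ ∑ _x ∈ S, (2^n : ℝ) := by
        apply Finset.sum_le_sum
        intro x hx
        exact_mod_cast hfbound x hx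
    _ = (S.card : ℝ) * 2^n := by rw [Finset.sum_const, nsmul_eq_mul]

include hs ht0 htk htmono hmaps haff in
lemma grid_cover (ε : ℝ) (hε : 0 < ε) (n : ℕ) :
    ∃ S : Finset ℝ, IsDynCoverOf f (Icc (0:ℝ) 1) {p : ℝ × ℝ | dist p.1 p.2 < ε} n S ∧
      0 < S.card ∧ (S.card : ℝ) ≤ s^n/ε + 1 := by
  classical
  have hs0 : (0:ℝ) < s := lt_trans one_pos hs
  set c := ε / s^n with hc
  have hc0 : 0 < c := by positivity
  set N := ⌊1/c⌋₊ with hN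
  refine ⟨(Finset.range (N+1)).image (fun i : ℕ => (i:ℝ)*c), ?_, ?_, ?_⟩
  · intro y hy
    set i := ⌊y/c⌋₊ with hi
    have hiN : i ≤ N := Nat.floor_mono ((div_le_div_iff_of_pos_right hc0).2 hy.2)
    set x := (i:ℝ)*c with hx
    have hx0 : 0 ≤ x := by positivity
    have hxy : x ≤ y := by
      rw [hx]
      calc (i:ℝ)*c ≤ (y/c)*c := by
            apply mul_le_mul_of_nonneg_right _ hc0.le
            exact Nat.floor_le (div_nonneg hy.1 hc0.le)
        _ = y := by field_simp
    have hyx : y - x < c := by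
      have := Nat.lt_floor_add_one (y/c)
      rw [hx]
      have h2 : y < ((i:ℝ)+1)*c := by
        calc y = (y/c)*c := by field_simp
          _ < ((i:ℝ)+1)*c := by
              apply mul_lt_mul_of_pos_right _ hc0
              exact_mod_cast this
      linarith
    have hxI : x ∈ Icc (0:ℝ) 1 := ⟨hx0, hxy.trans hy.2⟩
    have him : i ∈ Finset.range (N+1) := Finset.mem_range.2 (Nat.lt_succ_of_le hiN)
    refine ⟨x, Finset.mem_coe.2
      (Finset.mem_image_of_mem (fun i : ℕ => (i:ℝ)*c) him), ?_⟩
    rw [mem_dynEntourage]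
    intro j hj
    rw [mem_setOf_eq, dist_comm]
    have hlip := lip_iter hs ht0 htk htmono hmaps haff j x hxI y hy
    have habs : |x - y| < c := by
      rw [abs_sub_comm, abs_of_nonneg (by linarith)]
      exact hyx
    calc dist (f^[j] x) (f^[j] y) = |f^[j] x - f^[j] y| := Real.dist_eq _ _
      _ ≤ s^j * |x - y| := hlip
      _ ≤ s^n * |x - y| := by
          apply mul_le_mul_of_nonneg_right _ (abs_nonneg _)
          exact pow_le_pow_right₀ hs.le hj.le
      _ < s^n * c := mul_lt_mul_of_pos_left habs (by positivity)
      _ = ε := by rw [hc]; field_simp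
  · rw [Finset.card_pos]
    exact ⟨(0:ℕ)*c, Finset.mem_image_of_mem (fun i : ℕ => (i:ℝ)*c)
      (Finset.mem_range.2 (Nat.succ_pos N))⟩
  · have h1 : ((Finset.range (N+1)).image (fun i : ℕ => (i:ℝ)*c)).card ≤ N+1 := by
      exact (Finset.card_image_le (s := Finset.range (N+1))
        (f := fun i : ℕ => (i:ℝ)*c)).trans (le_of_eq (Finset.card_range _))
    have h2 : ((N:ℝ)) ≤ 1/c := Nat.floor_le (by positivity)
    have h3 : (1:ℝ)/c = s^n/ε := by rw [hc]; field_simp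
    calc (((Finset.range (N+1)).image (fun i : ℕ => (i:ℝ)*c)).card : ℝ) ≤ ((N+1 : ℕ) : ℝ) := by
          exact_mod_cast h1
      _ = (N:ℝ) + 1 := by push_cast; ring
      _ ≤ 1/c + 1 := by linarith
      _ = s^n/ε + 1 := by rw [h3]

include hs ht0 htk htmono hmaps haff in
lemma upper (hk : 1 ≤ k) :
    Dynamics.coverEntropy f (Icc (0:ℝ) 1) ≤ (Real.log s : EReal) := by
  have hs0 : (0:ℝ) < s := lt_trans one_pos hs
  apply iSup₂_le
  intro U hUuni
  obtain ⟨ε, hε, hsubU⟩ := Metric.mem_uniformity_dist.1 hUuni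
  set V := {p : ℝ × ℝ | dist p.1 p.2 < ε/2} with hV
  haveI hVsymm : SetRel.IsSymm V := ⟨fun a b h => by simpa [hV, dist_comm] using h⟩
  have hVU : V ○ V ⊆ U := by
    rintro ⟨a, b⟩ hab
    obtain ⟨z, h1, h2⟩ := SetRel.mem_comp.1 hab
    apply hsubU
    calc dist a b ≤ dist a z + dist z b := dist_triangle a z b
      _ < ε/2 + ε/2 := add_lt_add h1 h2
      _ = ε := by ring
  apply (coverEntropyEntourage_antitone f (Icc (0:ℝ) 1) hVU).trans
  rw [← EReal.le_of_forall_lt_iff_le]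
  intro b hb
  set C : ℝ := 1/(ε/2) + 1 with hC
  have hεpos : (0:ℝ) < ε/2 := by linarith
  have hC1 : 1 ≤ C := by
    rw [hC]
    have : 0 < 1/(ε/2) := by positivity
    linarith
  have hClog : 0 ≤ Real.log C := Real.log_nonneg hC1
  -- pick n large
  obtain ⟨n₀, hn₀⟩ := exists_nat_gt (Real.log C / (b - Real.log s))
  set n := n₀ + 1 with hn
  have hn1 : 0 < n := Nat.succ_pos n₀
  have hbs : 0 < b - Real.log s := by
    have := hb
    rw [EReal.coe_lt_coe_iff] at this
    linarith
  have hnlarge : Real.log C < (n:ℝ) * (b - Real.log s) := by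
    have h1 : Real.log C / (b - Real.log s) < n := by
      calc Real.log C / (b - Real.log s) < n₀ := hn₀
        _ ≤ n := by exact_mod_cast Nat.le_succ n₀
    calc Real.log C = (Real.log C / (b - Real.log s)) * (b - Real.log s) := by
          field_simp
      _ < (n:ℝ) * (b - Real.log s) := by
          exact mul_lt_mul_of_pos_right h1 hbs
  obtain ⟨S, hScov, hScard0, hScard⟩ :=
    grid_cover hs ht0 htk htmono hmaps haff (ε/2) (by linarith) n
  have hEnt := hScov.coverEntropyEntourage_le_log_card_div hmaps hn1.ne'
  apply hEnt.trans
  -- now bound log card / n by b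
  have hcardC : (S.card : ℝ) ≤ C * s^n := by
    have h1 : (1:ℝ) ≤ s^n := one_le_pow₀ hs.le
    have h2 : s^n/(ε/2) = (1/(ε/2)) * s^n := by ring
    calc (S.card : ℝ) ≤ s^n/(ε/2) + 1 := hScard
      _ ≤ (1/(ε/2)) * s^n + s^n := by rw [← h2]; linarith
      _ = C * s^n := by rw [hC]; ring
  have hlogcard : Real.log (S.card) ≤ Real.log C + (n:ℝ) * Real.log s := by
    calc Real.log (S.card) ≤ Real.log (C * s^n) := by
          apply Real.log_le_log (by exact_mod_cast hScard0) hcardC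
      _ = Real.log C + Real.log (s^n) := Real.log_mul (by linarith) (by positivity)
      _ = Real.log C + (n:ℝ) * Real.log s := by rw [Real.log_pow]
  -- EReal computation
  have hlogS : ENNReal.log (S.card : ENNReal) = (Real.log (S.card) : EReal) := by
    rw [← ENNReal.ofReal_natCast, ENNReal.log_ofReal_of_pos (by exact_mod_cast hScard0)]
  rw [hlogS]
  rw [EReal.div_le_iff_le_mul (by exact_mod_cast hn1 : (0:EReal) < (n:ℕ)) (EReal.natCast_ne_top n)]
  have hfinal : Real.log (S.card) ≤ (n:ℝ) * b := by
    calc Real.log (S.card) ≤ Real.log C + (n:ℝ) * Real.log s := hlogcard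
      _ ≤ (n:ℝ) * (b - Real.log s) + (n:ℝ) * Real.log s := by linarith
      _ = (n:ℝ) * b := by ring
  rw [← EReal.coe_coe_eq_natCast n]
  calc (Real.log (S.card) : EReal) ≤ ((((n:ℝ)) * b : ℝ) : EReal) :=
        EReal.coe_le_coe_iff.2 hfinal
    _ = (((n:ℝ)) : EReal) * (b : EReal) := EReal.coe_mul _ _
    _ = _ := by rfl

include hs ht0 htk htmono hmaps haff in
lemma lower (hk : 1 ≤ k) :
    (Real.log s : EReal) ≤ Dynamics.coverEntropy f (Icc (0:ℝ) 1) := by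
  have hs0 : (0:ℝ) < s := lt_trans one_pos hs
  have hcm : ∀ m : ℕ, 1 ≤ m →
      ((Real.log s - Real.log 2 / m : ℝ) : EReal) ≤ Dynamics.coverEntropy f (Icc (0:ℝ) 1) := by
    intro m hm
    obtain ⟨U, hUuni, hU⟩ := key hs ht0 htk htmono hmaps haff hk m hm
    refine le_trans ?_ (coverEntropyEntourage_le_coverEntropy f _ hUuni)
    set c : ℝ := Real.log s - Real.log 2 / m with hc
    show (c : EReal) ≤ Filter.atTop.limsup fun n : ℕ =>
      ENNReal.log (coverMincard f (Icc (0:ℝ) 1) U n) / (n : EReal)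
    apply Filter.le_limsup_of_frequently_le'
    rw [Filter.frequently_atTop]
    intro N₀
    set N := N₀ + 1 with hN
    refine ⟨N*m, ?_, ?_⟩
    · calc N₀ ≤ N := Nat.le_succ N₀
        _ = N*1 := (Nat.mul_one N).symm
        _ ≤ N*m := Nat.mul_le_mul_left N hm
    · rcases eq_top_or_lt_top (coverMincard f (Icc (0:ℝ) 1) U (N*m)) with htop | hfin
      · rw [htop]
        rw [ENat.toENNReal_top, ENNReal.log_top,
          EReal.top_div_of_pos_ne_top (by exact_mod_cast Nat.succ_mul_pos N₀ hm :
            (0:EReal) < ((N*m : ℕ) : EReal)) (EReal.natCast_ne_top _)]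
        exact le_top
      · obtain ⟨S, hScov, hScard⟩ := (coverMincard_finite_iff f (Icc (0:ℝ) 1) U (N*m)).1 hfin
        have hreal : s ^ (N*m) ≤ (S.card : ℝ) * 2 ^ N := hU N (Nat.succ_pos N₀) S hScov
        have hcard0 : 0 < S.card := by
          rcases Nat.eq_zero_or_pos S.card with h0 | h
          · exfalso
            rw [h0] at hreal
            push_cast at hreal
            nlinarith [pow_pos hs0 (N*m)]
          · exact h
        have hlogineq : c * ((N*m : ℕ) : ℝ) ≤ Real.log S.card := by
          have h1 : (0:ℝ) < s ^ (N*m) / 2 ^ N := by positivity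
          have h2 : s ^ (N*m) / 2 ^ N ≤ (S.card : ℝ) := by
            rw [div_le_iff₀ (by positivity)]
            exact hreal
          have h3 := Real.log_le_log h1 h2
          rw [Real.log_div (by positivity) (by positivity), Real.log_pow, Real.log_pow] at h3
          have hm0 : (m:ℝ) ≠ 0 := by
            have : 0 < m := hm
            exact_mod_cast this.ne'
          have heq : c * ((N*m : ℕ) : ℝ) = (↑(N*m)) * Real.log s - ↑N * Real.log 2 := by
            rw [hc]
            push_cast
            field_simp
          rw [heq]
          exact h3
        rw [← hScard]
        have hlogS : ENNReal.log ((S.card : ℕ∞) : ENNReal) = (Real.log (S.card) : EReal) := by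
          rw [ENat.toENNReal_coe, ← ENNReal.ofReal_natCast,
            ENNReal.log_ofReal_of_pos (by exact_mod_cast hcard0)]
        rw [hlogS]
        rw [EReal.le_div_iff_mul_le (by exact_mod_cast Nat.succ_mul_pos N₀ hm :
          (0:EReal) < ((N*m : ℕ) : EReal)) (EReal.natCast_ne_top _)]
        rw [← EReal.coe_coe_eq_natCast (N*m), ← EReal.coe_mul]
        exact EReal.coe_le_coe_iff.2 hlogineq
  -- conclude by letting m → ∞
  apply le_of_forall_lt
  intro c hc
  induction c using EReal.rec with
  | bot => exact lt_of_lt_of_le (by exact_mod_cast bot_lt_iff_ne_bot.2 (EReal.coe_ne_bot _) :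
      (⊥ : EReal) < ((Real.log s - Real.log 2 / (1:ℕ) : ℝ) : EReal)) (hcm 1 le_rfl)
  | coe e =>
    have he : e < Real.log s := EReal.coe_lt_coe_iff.1 hc
    obtain ⟨m₀, hm₀⟩ := exists_nat_gt (Real.log 2 / (Real.log s - e))
    set m := m₀ + 1 with hm
    have hmge : Real.log 2 / (Real.log s - e) < m := by
      calc Real.log 2 / (Real.log s - e) < m₀ := hm₀
        _ ≤ m := by exact_mod_cast Nat.le_succ m₀
    have hse : 0 < Real.log s - e := by linarith
    have hmpos : (0:ℝ) < m := by positivity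
    have hstep : Real.log 2 / (m:ℝ) < Real.log s - e := by
      rw [div_lt_iff₀ hmpos]
      calc Real.log 2 = (Real.log 2 / (Real.log s - e)) * (Real.log s - e) := by field_simp
        _ < (m:ℝ) * (Real.log s - e) := mul_lt_mul_of_pos_right hmge hse
        _ = (Real.log s - e) * m := by ring
    calc (e : EReal) < ((Real.log s - Real.log 2 / m : ℝ) : EReal) := by
          rw [EReal.coe_lt_coe_iff]
          linarith
      _ ≤ _ := hcm m (Nat.succ_pos m₀)
  | top => exact absurd hc (not_top_lt)

end key

theorem main (f : ℝ → ℝ) (s : ℝ) (hs : 1 < s)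
    (k : ℕ) (hk : 1 ≤ k) (t : ℕ → ℝ) (ht0 : t 0 = 0) (htk : t k = 1)
    (htmono : ∀ i < k, t i < t (i + 1))
    (hcont : ContinuousOn f (Set.Icc 0 1))
    (hmaps : Set.MapsTo f (Set.Icc 0 1) (Set.Icc 0 1))
    (haff : ∀ i < k, ∃ m q : ℝ, (m = s ∨ m = -s) ∧
      ∀ x ∈ Set.Icc (t i) (t (i + 1)), f x = m * x + q) :
    Dynamics.coverEntropy f (Set.Icc 0 1) = (Real.log s : EReal) :=
  le_antisymm (upper hs ht0 htk htmono hmaps haff hk)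
    (lower hs ht0 htk htmono hmaps haff hk)

end PLentropy


/-- A continuous piecewise linear selfmap of `[0,1]` with constant absolute slope
`s > 1` on each of its finitely many laps has topological entropy `log s`. -/
theorem coverEntropy_piecewiseLinear_constSlope (f : ℝ → ℝ) (s : ℝ) (hs : 1 < s)
    (k : ℕ) (hk : 1 ≤ k) (t : ℕ → ℝ) (ht0 : t 0 = 0) (htk : t k = 1)
    (htmono : ∀ i < k, t i < t (i + 1))
    (hcont : ContinuousOn f (Set.Icc 0 1))
    (hmaps : Set.MapsTo f (Set.Icc 0 1) (Set.Icc 0 1))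
    (haff : ∀ i < k, ∃ m q : ℝ, (m = s ∨ m = -s) ∧
      ∀ x ∈ Set.Icc (t i) (t (i + 1)), f x = m * x + q) :
    Dynamics.coverEntropy f (Set.Icc 0 1) = (Real.log s : EReal) :=
  PLentropy.main f s hs k hk t ht0 htk htmono hcont hmaps haff
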